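/- Let N⁺ = {((1, s; 0, 1), 0) : s ∈ ℝ} ⊆ G. For a closed subgroup H of G, the following are equivalent: (1) there exists a sequence (x_n) in G such that x_n N⁺ x_n⁻¹ converges to H in the Chabauty sense; (2) there exists x ∈ G such that H = x N⁺ x⁻¹ or H = x V₀ x⁻¹, where V₀ = {(I, (t, 0)) : t ∈ ℝ}. -/

import Mathlib

open Filter Topology

noncomputable section

/-- `SL(2,ℝ)`. -/
abbrev SL2 := Matrix.SpecialLinearGroup (Fin 2) ℝ

/-- The topology on `SL(2,ℝ)` induced from the space of `2×2` real matrices. -/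
instance : TopologicalSpace SL2 :=
  TopologicalSpace.induced ((↑) : SL2 → Matrix (Fin 2) (Fin 2) ℝ) inferInstance

/-- The underlying type of the group `G = SL(2,ℝ) ⋉ ℝ²`, with the product topology. -/
abbrev GG := SL2 × (Fin 2 → ℝ)

/-- Multiplication in `G`: `(g,v)(g',v') = (gg', v + g·v')`. -/
def gmul (x y : GG) : GG := (x.1 * y.1, x.2 + (x.1 : Matrix (Fin 2) (Fin 2) ℝ).mulVec y.2)

/-- The identity element of `G`. -/
def gone : GG := (1, 0)

/-- Inversion in `G`. -/
def ginv (x : GG) : GG := (x.1⁻¹, -((x.1⁻¹ : SL2) : Matrix (Fin 2) (Fin 2) ℝ).mulVec x.2)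

/-- The conjugate `x H x⁻¹` of a subset `H ⊆ G` by `x ∈ G`. -/
def conjSet (x : GG) (H : Set GG) : Set GG := (fun h => gmul (gmul x h) (ginv x)) '' H

/-- `H` is a closed subgroup of `G`. -/
def IsClosedSubgroup (H : Set GG) : Prop :=
  IsClosed H ∧ gone ∈ H ∧ (∀ a ∈ H, ∀ b ∈ H, gmul a b ∈ H) ∧ (∀ a ∈ H, ginv a ∈ H)

/-- Chabauty convergence of a sequence of subsets of a topological space:
(i) every point of the limit is a limit of a sequence of points of the `S n`;
(ii) every limit of a subsequence of points of the `S n` lies in the limit set. -/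
def ChabautyTendsto {X : Type*} [TopologicalSpace X] (S : ℕ → Set X) (T : Set X) : Prop :=
  (∀ h ∈ T, ∃ u : ℕ → X, (∀ n, u n ∈ S n) ∧ Tendsto u atTop (𝓝 h)) ∧
  (∀ k : ℕ → ℕ, StrictMono k → ∀ u : ℕ → X, (∀ n, u n ∈ S (k n)) →
    ∀ x : X, Tendsto u atTop (𝓝 x) → x ∈ T)

/-- The Levi subgroup `L = SL(2,ℝ) × {0}`. -/
def Lset : Set GG := {x | x.2 = 0}

/-- The subgroup `N⁺ ⋉ ℝ² = {((1,s;0,1), v) : s ∈ ℝ, v ∈ ℝ²}`. -/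
def NplusR2 : Set GG := {x | ∃ s : ℝ, (x.1 : Matrix (Fin 2) (Fin 2) ℝ) = !![1, s; 0, 1]}

/-- The maximal compact subgroup `K = SO(2,ℝ) × {0}`. -/
def Kset : Set GG :=
  {x | ∃ θ : ℝ, (x.1 : Matrix (Fin 2) (Fin 2) ℝ) =
      !![Real.cos θ, Real.sin θ; -Real.sin θ, Real.cos θ] ∧ x.2 = 0}

/-- `V_c = {(I,(t,ct)) : t ∈ ℝ}`. -/
def Vc (c : ℝ) : Set GG := {x | ∃ t : ℝ, x.1 = 1 ∧ x.2 = ![t, c * t]}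

/-- `V_∞ = {(I,(0,t)) : t ∈ ℝ}`. -/
def Vinf : Set GG := {x | ∃ t : ℝ, x.1 = 1 ∧ x.2 = ![0, t]}

/-- `Ñ⁺ = {(±(1,s;0,1), 0) : s ∈ ℝ}`. -/
def Ntilde : Set GG :=
  {x | (∃ s : ℝ, (x.1 : Matrix (Fin 2) (Fin 2) ℝ) = !![1, s; 0, 1] ∨
      (x.1 : Matrix (Fin 2) (Fin 2) ℝ) = -!![1, s; 0, 1]) ∧ x.2 = 0}

/-- The diagonal subgroup `A = {(diag(a,1/a), 0) : a > 0}`. -/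
def Aset : Set GG :=
  {x | ∃ a : ℝ, 0 < a ∧ (x.1 : Matrix (Fin 2) (Fin 2) ℝ) = !![a, 0; 0, a⁻¹] ∧ x.2 = 0}

/-- `V_{(a,b,c)} = {((1,at;0,1), (ct + abt²/2, bt)) : t ∈ ℝ}`. -/
def Vabc (a b c : ℝ) : Set GG :=
  {x | ∃ t : ℝ, (x.1 : Matrix (Fin 2) (Fin 2) ℝ) = !![1, a * t; 0, 1] ∧
      x.2 = ![c * t + a * b * t ^ 2 / 2, b * t]}

/-- The upper triangular Borel subgroup `B` of `SL(2,ℝ)`, inside `G`. -/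
def Bset : Set GG :=
  {x | ∃ a s : ℝ, a ≠ 0 ∧ (x.1 : Matrix (Fin 2) (Fin 2) ℝ) = !![a, s; 0, a⁻¹] ∧ x.2 = 0}

/-- `W = {((1,s;0,1), (t,0)) : s, t ∈ ℝ} = N⁺ ⋉ {(t,0)}`. -/
def Wset : Set GG :=
  {x | ∃ s t : ℝ, (x.1 : Matrix (Fin 2) (Fin 2) ℝ) = !![1, s; 0, 1] ∧ x.2 = ![t, 0]}

/-- The Borel subgroup `P = B ⋉ ℝ²` of `G`. -/
def Pset : Set GG :=
  {x | ∃ a s : ℝ, a ≠ 0 ∧ (x.1 : Matrix (Fin 2) (Fin 2) ℝ) = !![a, s; 0, a⁻¹]}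

/-- The translation subgroup `ℝ² = {(I,v) : v ∈ ℝ²}`. -/
def R2set : Set GG := {x | x.1 = 1}

/-- The unipotent subgroup `N⁺ = {((1,s;0,1), 0) : s ∈ ℝ}`. -/
def Nplus : Set GG := {x | ∃ s : ℝ, (x.1 : Matrix (Fin 2) (Fin 2) ℝ) = !![1, s; 0, 1] ∧ x.2 = 0}

/-- `V₀ = {(I,(t,0)) : t ∈ ℝ}`. -/
def V0 : Set GG := {x | ∃ t : ℝ, x.1 = 1 ∧ x.2 = ![t, 0]}

def upperUnipotent (s : ℝ) : SL2 :=
  ⟨!![1, s; 0, 1], by simp [Matrix.det_fin_two_of]⟩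

-- new defs
def unipM (w : Fin 2 → ℝ) (s : ℝ) : Matrix (Fin 2) (Fin 2) ℝ :=
  !![1 - s * (w 0 * w 1), s * w 0 ^ 2; -(s * w 1 ^ 2), 1 + s * (w 0 * w 1)]

lemma unipM_det (w : Fin 2 → ℝ) (s : ℝ) : (unipM w s).det = 1 := by
  simp [unipM, Matrix.det_fin_two_of]; ring

def unipSL (w : Fin 2 → ℝ) (s : ℝ) : SL2 := ⟨unipM w s, unipM_det w s⟩

def Lset' (w : Fin 2 → ℝ) (c : ℝ) : Set GG :=
  {y | ∃ s : ℝ, (y.1 : Matrix (Fin 2) (Fin 2) ℝ) = unipM w s ∧ y.2 = (s * c) • w}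

def LV (w : Fin 2 → ℝ) : Set GG := {y | ∃ t : ℝ, y.1 = 1 ∧ y.2 = t • w}

lemma conj_formula (g : SL2) (v w : Fin 2 → ℝ) (r : ℝ) (hr : r ≠ 0)
    (h0 : (g : Matrix (Fin 2) (Fin 2) ℝ) 0 0 = r * w 0)
    (h1 : (g : Matrix (Fin 2) (Fin 2) ℝ) 1 0 = r * w 1) (s : ℝ) :
    gmul (gmul (g, v) (upperUnipotent s, 0)) (ginv (g, v)) =
      (unipSL w (s * r ^ 2), ((s * r ^ 2) * (w 1 * v 0 - w 0 * v 1)) • w) := by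
  have hdet := g.prop
  rw [Matrix.det_fin_two] at hdet
  have e1 : gmul (g, v) (upperUnipotent s, 0) = (g * upperUnipotent s, v) := by
    simp [gmul]
  rw [e1]
  have hM : ((g * upperUnipotent s * g⁻¹ : SL2) : Matrix (Fin 2) (Fin 2) ℝ) = unipM w (s * r ^ 2) := by
    rw [Matrix.SpecialLinearGroup.coe_mul, Matrix.SpecialLinearGroup.coe_mul,
      Matrix.SpecialLinearGroup.coe_inv, Matrix.adjugate_fin_two]
    rw [h0, h1] at hdet
    ext i j
    fin_cases i <;> fin_cases j <;>
      simp [upperUnipotent, unipM, Matrix.mul_apply, Fin.sum_univ_two, h0, h1] <;>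
      first
        | ring1
        | linear_combination hdet
        | linear_combination s * hdet
  have hv : v + ((g * upperUnipotent s : SL2) : Matrix (Fin 2) (Fin 2) ℝ).mulVec
      (-(((g⁻¹ : SL2) : Matrix (Fin 2) (Fin 2) ℝ)).mulVec v) =
      ((s * r ^ 2) * (w 1 * v 0 - w 0 * v 1)) • w := by
    rw [Matrix.mulVec_neg, Matrix.mulVec_mulVec, ← Matrix.SpecialLinearGroup.coe_mul, hM]
    funext i
    fin_cases i <;>
      simp [unipM, Matrix.mulVec, dotProduct, Fin.sum_univ_two, Matrix.vecHead, Matrix.vecTail] <;> ring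
  show ((g * upperUnipotent s) * g⁻¹, v + _) = _
  refine Prod.ext (Subtype.ext ?_) ?_
  · exact hM
  · exact hv

lemma conj_nplus_eq (g : SL2) (v w : Fin 2 → ℝ) (r : ℝ) (hr : r ≠ 0)
    (h0 : (g : Matrix (Fin 2) (Fin 2) ℝ) 0 0 = r * w 0)
    (h1 : (g : Matrix (Fin 2) (Fin 2) ℝ) 1 0 = r * w 1) :
    conjSet (g, v) Nplus = Lset' w (w 1 * v 0 - w 0 * v 1) := by
  ext z
  constructor
  · rintro ⟨h, ⟨s, hU, h2⟩, rfl⟩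
    have hh : h = (upperUnipotent s, 0) := Prod.ext (Subtype.ext hU) h2
    rw [hh]
    show gmul (gmul (g, v) (upperUnipotent s, 0)) (ginv (g, v)) ∈ _
    rw [conj_formula g v w r hr h0 h1 s]
    exact ⟨s * r ^ 2, rfl, rfl⟩
  · rintro ⟨s, hfst, hsnd⟩
    refine ⟨(upperUnipotent (s / r ^ 2), 0), ⟨s / r ^ 2, rfl, rfl⟩, ?_⟩
    show gmul (gmul (g, v) (upperUnipotent (s / r ^ 2), 0)) (ginv (g, v)) = z
    rw [conj_formula g v w r hr h0 h1 (s / r ^ 2)]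
    have hs : s / r ^ 2 * r ^ 2 = s := by field_simp
    rw [hs]
    exact (Prod.ext (Subtype.ext hfst) hsnd).symm

lemma vec_eta (v : Fin 2 → ℝ) : ![v 0, v 1] = v := by
  funext i; fin_cases i <;> simp

lemma conj_nplus_param (x : GG) :
    ∃ w : Fin 2 → ℝ, w 0 ^ 2 + w 1 ^ 2 = 1 ∧ ∃ c : ℝ, conjSet x Nplus = Lset' w c := by
  obtain ⟨g, v⟩ := x
  set a := (g : Matrix (Fin 2) (Fin 2) ℝ) 0 0 with ha
  set b := (g : Matrix (Fin 2) (Fin 2) ℝ) 1 0 with hb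
  have hdet := g.prop
  rw [Matrix.det_fin_two] at hdet
  have hab : a ≠ 0 ∨ b ≠ 0 := by
    by_contra hc
    push_neg at hc
    rw [← ha, ← hb] at hdet
    rw [hc.1, hc.2] at hdet
    simp at hdet
  have hρ : 0 < a ^ 2 + b ^ 2 := by
    rcases hab with h | h
    · have : 0 < a ^ 2 := by positivity
      nlinarith [sq_nonneg b]
    · have : 0 < b ^ 2 := by positivity
      nlinarith [sq_nonneg a]
  set r := Real.sqrt (a ^ 2 + b ^ 2) with hrdef
  have hr : 0 < r := Real.sqrt_pos.2 hρ
  have hr2 : r ^ 2 = a ^ 2 + b ^ 2 := Real.sq_sqrt hρ.le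
  refine ⟨![a / r, b / r], ?_, ?_⟩
  · simp only [Matrix.cons_val_zero, Matrix.cons_val_one, Matrix.head_cons]
    field_simp
    linarith [hr2]
  refine ⟨(![a / r, b / r]) 1 * v 0 - (![a / r, b / r]) 0 * v 1, ?_⟩
  exact conj_nplus_eq g v _ r hr.ne' (by simp; field_simp; rfl) (by simp; field_simp; rfl)

def rotSL (w : Fin 2 → ℝ) (hw : w 0 ^ 2 + w 1 ^ 2 = 1) : SL2 :=
  ⟨!![w 0, -(w 1); w 1, w 0], by
    simp [Matrix.det_fin_two_of]; linear_combination hw⟩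

lemma Lset'_eq_conj (w : Fin 2 → ℝ) (hw : w 0 ^ 2 + w 1 ^ 2 = 1) (c : ℝ) :
    Lset' w c = conjSet (rotSL w hw, ![c * w 1, -(c * w 0)]) Nplus := by
  rw [conj_nplus_eq (rotSL w hw) _ w 1 one_ne_zero (by simp [rotSL]) (by simp [rotSL])]
  have he : w 1 * (![c * w 1, -(c * w 0)]) 0 - w 0 * (![c * w 1, -(c * w 0)]) 1 = c := by
    simp only [Matrix.cons_val_zero, Matrix.cons_val_one, Matrix.head_cons]
    linear_combination c * hw
  rw [he]

lemma conj_v0_point (g : SL2) (v : Fin 2 → ℝ) (t : ℝ) :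
    gmul (gmul (g, (0 : Fin 2 → ℝ)) ((1 : SL2), ![t, 0])) (ginv (g, 0)) =
      ((1 : SL2), fun i => t * (g : Matrix (Fin 2) (Fin 2) ℝ) i 0) := by
  have e1 : gmul (g, (0 : Fin 2 → ℝ)) ((1 : SL2), ![t, 0]) =
      (g, (g : Matrix (Fin 2) (Fin 2) ℝ).mulVec ![t, 0]) := by
    simp [gmul]
  rw [e1]
  have e2 : ginv (g, (0 : Fin 2 → ℝ)) = (g⁻¹, 0) := by
    simp [ginv]
  rw [e2]
  refine Prod.ext ?_ ?_
  · show g * g⁻¹ = 1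
    group
  · show (g : Matrix (Fin 2) (Fin 2) ℝ).mulVec ![t, 0] +
      (g : Matrix (Fin 2) (Fin 2) ℝ).mulVec 0 = _
    funext i
    fin_cases i <;>
      simp [Matrix.mulVec, dotProduct, Fin.sum_univ_two, Matrix.vecHead, Matrix.vecTail] <;> ring

lemma conj_v0_eq (g : SL2) (w : Fin 2 → ℝ) (r : ℝ) (hr : r ≠ 0)
    (h0 : (g : Matrix (Fin 2) (Fin 2) ℝ) 0 0 = r * w 0)
    (h1 : (g : Matrix (Fin 2) (Fin 2) ℝ) 1 0 = r * w 1) :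
    conjSet (g, (0 : Fin 2 → ℝ)) V0 = LV w := by
  ext z
  constructor
  · rintro ⟨h, ⟨t, hU, h2⟩, rfl⟩
    have hh : h = ((1 : SL2), ![t, 0]) := Prod.ext hU h2
    rw [hh]
    show gmul (gmul (g, (0 : Fin 2 → ℝ)) ((1 : SL2), ![t, 0])) (ginv (g, 0)) ∈ _
    rw [conj_v0_point g 0 t]
    refine ⟨t * r, rfl, ?_⟩
    funext i
    fin_cases i <;> simp [h0, h1] <;> ring
  · rintro ⟨t, hfst, hsnd⟩
    refine ⟨((1 : SL2), ![t / r, 0]), ⟨t / r, rfl, rfl⟩, ?_⟩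
    show gmul (gmul (g, (0 : Fin 2 → ℝ)) ((1 : SL2), ![t / r, 0])) (ginv (g, 0)) = z
    rw [conj_v0_point g 0 (t / r)]
    refine (Prod.ext hfst ?_).symm
    rw [hsnd]
    funext i
    fin_cases i <;> simp [h0, h1] <;> field_simp <;> ring

lemma tendsto_GG_iff {u : ℕ → GG} {x : GG} :
    Tendsto u atTop (𝓝 x) ↔
      ((∀ i j, Tendsto (fun n => ((u n).1 : Matrix (Fin 2) (Fin 2) ℝ) i j) atTop
          (𝓝 ((x.1 : Matrix (Fin 2) (Fin 2) ℝ) i j))) ∧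
        ∀ i, Tendsto (fun n => (u n).2 i) atTop (𝓝 (x.2 i))) := by
  rw [show x = (x.1, x.2) from rfl, nhds_prod_eq, tendsto_prod_iff']
  constructor
  · rintro ⟨h1, h2⟩
    constructor
    · intro i j
      have : Tendsto (fun n => ((u n).1 : Matrix (Fin 2) (Fin 2) ℝ)) atTop
          (𝓝 ((x.1 : Matrix (Fin 2) (Fin 2) ℝ))) := by
        erw [nhds_induced ((↑) : SL2 → Matrix (Fin 2) (Fin 2) ℝ) x.1] at h1
        exact tendsto_comap_iff.1 h1
      exact tendsto_pi_nhds.1 (tendsto_pi_nhds.1 this i) j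
    · exact tendsto_pi_nhds.1 h2
  · rintro ⟨h1, h2⟩
    constructor
    · erw [nhds_induced ((↑) : SL2 → Matrix (Fin 2) (Fin 2) ℝ) x.1]
      refine tendsto_comap_iff.2 ?_
      exact tendsto_pi_nhds.2 fun i => tendsto_pi_nhds.2 fun j => h1 i j
    · exact tendsto_pi_nhds.2 h2

def Mmat (w : Fin 2 → ℝ) : Matrix (Fin 2) (Fin 2) ℝ :=
  !![-(w 0 * w 1), w 0 ^ 2; -(w 1 ^ 2), w 0 * w 1]

lemma unipM_apply (w : Fin 2 → ℝ) (s : ℝ) (i j : Fin 2) :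
    unipM w s i j = (1 : Matrix (Fin 2) (Fin 2) ℝ) i j + s * Mmat w i j := by
  fin_cases i <;> fin_cases j <;> simp [unipM, Mmat, Matrix.one_apply] <;> ring

lemma unit_abs_le (w : Fin 2 → ℝ) (hw : w 0 ^ 2 + w 1 ^ 2 = 1) (i j : Fin 2) :
    |Mmat w i j| ≤ 1 := by
  fin_cases i <;> fin_cases j <;>
    · simp [Mmat, -abs_mul]
      rw [abs_le]
      constructor <;> nlinarith [sq_nonneg (w 0 - w 1), sq_nonneg (w 0 + w 1), sq_nonneg (w 0), sq_nonneg (w 1)]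

lemma bdd_mul_null {s : ℕ → ℝ} {b : ℕ → ℝ} (hs : Tendsto s atTop (𝓝 0))
    (hb : ∀ n, |b n| ≤ 1) : Tendsto (fun n => s n * b n) atTop (𝓝 0) := by
  apply squeeze_zero_norm (a := fun n => |s n|)
  · intro n
    rw [Real.norm_eq_abs, abs_mul]
    calc |s n| * |b n| ≤ |s n| * 1 := by
          exact mul_le_mul_of_nonneg_left (hb n) (abs_nonneg _)
      _ = |s n| := mul_one _
  · have := hs.abs
    simpa using this

lemma exists_param {w : ℕ → Fin 2 → ℝ} {c : ℕ → ℝ} (hw : ∀ n, (w n) 0 ^ 2 + (w n) 1 ^ 2 = 1)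
    {u : ℕ → GG} (hu : ∀ n, u n ∈ Lset' (w n) (c n)) {h : GG} (ht : Tendsto u atTop (𝓝 h)) :
    ∃ s : ℕ → ℝ, (∀ n, ((u n).1 : Matrix (Fin 2) (Fin 2) ℝ) = unipM (w n) (s n)) ∧
      (∀ n, (u n).2 = (s n * c n) • w n) ∧
      Tendsto s atTop (𝓝 ((h.1 : Matrix (Fin 2) (Fin 2) ℝ) 0 1 - (h.1 : Matrix (Fin 2) (Fin 2) ℝ) 1 0)) := by
  choose s hs1 hs2 using hu
  refine ⟨s, hs1, hs2, ?_⟩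
  have key : ∀ n, s n = ((u n).1 : Matrix (Fin 2) (Fin 2) ℝ) 0 1 - ((u n).1 : Matrix (Fin 2) (Fin 2) ℝ) 1 0 := by
    intro n
    rw [hs1 n, unipM_apply, unipM_apply]
    simp [Mmat, Matrix.one_apply]
    linear_combination (-(s n)) * (hw n)
  have hm := tendsto_GG_iff.1 ht
  have := (hm.1 0 1).sub (hm.1 1 0)
  exact this.congr fun n => (key n).symm

lemma Mmat_tendsto {w : ℕ → Fin 2 → ℝ} {W : Fin 2 → ℝ}
    (hWt : ∀ i, Tendsto (fun n => w n i) atTop (𝓝 (W i))) (i j : Fin 2) :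
    Tendsto (fun n => Mmat (w n) i j) atTop (𝓝 (Mmat W i j)) := by
  fin_cases i <;> fin_cases j <;> simp only [Mmat, Matrix.cons_val_zero, Matrix.cons_val_one,
    Matrix.head_cons, Matrix.cons_val', Matrix.head_fin_const, Matrix.empty_val',
    Matrix.cons_val_fin_one]
  · exact ((hWt 0).mul (hWt 1)).neg
  · exact (hWt 0).pow 2
  · exact ((hWt 1).pow 2).neg
  · exact (hWt 0).mul (hWt 1)

lemma unip_tendsto {w : ℕ → Fin 2 → ℝ} {W : Fin 2 → ℝ}
    (hWt : ∀ i, Tendsto (fun n => w n i) atTop (𝓝 (W i))) {s : ℕ → ℝ} {σ : ℝ}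
    (hst : Tendsto s atTop (𝓝 σ)) (i j : Fin 2) :
    Tendsto (fun n => unipM (w n) (s n) i j) atTop (𝓝 (unipM W σ i j)) := by
  simp only [unipM_apply]
  exact tendsto_const_nhds.add (hst.mul (Mmat_tendsto hWt i j))

lemma unip_tendsto_one {w : ℕ → Fin 2 → ℝ} (hw : ∀ n, (w n) 0 ^ 2 + (w n) 1 ^ 2 = 1)
    {s : ℕ → ℝ} (hst : Tendsto s atTop (𝓝 0)) (i j : Fin 2) :
    Tendsto (fun n => unipM (w n) (s n) i j) atTop (𝓝 ((1 : Matrix (Fin 2) (Fin 2) ℝ) i j)) := by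
  simp only [unipM_apply]
  have := bdd_mul_null hst (fun n => unit_abs_le (w n) (hw n) i j)
  simpa using tendsto_const_nhds.add this

set_option maxHeartbeats 1000000 in
lemma Lset'_limit (w : Fin 2 → ℝ) (hw : w 0 ^ 2 + w 1 ^ 2 = 1) (c : ℝ) {u : ℕ → GG}
    (hu : ∀ n, u n ∈ Lset' w c) {z : GG} (hz : Tendsto u atTop (𝓝 z)) :
    z ∈ Lset' w c := by
  obtain ⟨s, hs1, hs2, hst⟩ := exists_param (w := fun _ => w) (c := fun _ => c) (fun _ => hw) hu hz
  set σ := (z.1 : Matrix (Fin 2) (Fin 2) ℝ) 0 1 - (z.1 : Matrix (Fin 2) (Fin 2) ℝ) 1 0 with hσ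
  have hm := tendsto_GG_iff.1 hz
  refine ⟨σ, ?_, ?_⟩
  · ext i j
    have t1 : Tendsto (fun n => unipM w (s n) i j) atTop
        (𝓝 ((z.1 : Matrix (Fin 2) (Fin 2) ℝ) i j)) :=
      (hm.1 i j).congr fun n => congrFun (congrFun (hs1 n) i) j
    have t2 : Tendsto (fun n => unipM w (s n) i j) atTop (𝓝 (unipM w σ i j)) :=
      unip_tendsto (W := w) (fun _ => tendsto_const_nhds) hst i j
    exact tendsto_nhds_unique t1 t2
  · funext i
    have t1 : Tendsto (fun n => (s n * c) * w i) atTop (𝓝 (z.2 i)) :=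
      (hm.2 i).congr fun n => by rw [hs2 n]; simp [mul_comm]
    have t2 : Tendsto (fun n => (s n * c) * w i) atTop (𝓝 ((σ * c) * w i)) :=
      (hst.mul_const c).mul_const (w i)
    have := tendsto_nhds_unique t1 t2
    show z.2 i = ((σ * c) • w) i
    simpa using this

lemma bw_unit {w : ℕ → Fin 2 → ℝ} (hw : ∀ n, (w n) 0 ^ 2 + (w n) 1 ^ 2 = 1) :
    ∃ W : Fin 2 → ℝ, W 0 ^ 2 + W 1 ^ 2 = 1 ∧ ∃ ψ : ℕ → ℕ, StrictMono ψ ∧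
      ∀ i, Tendsto (fun n => w (ψ n) i) atTop (𝓝 (W i)) := by
  set S : Set (Fin 2 → ℝ) := {v | v 0 ^ 2 + v 1 ^ 2 = 1} with hS
  have hSb : Bornology.IsBounded S := by
    apply (Metric.isBounded_closedBall (x := (0 : Fin 2 → ℝ)) (r := 1)).subset
    intro v hv
    rw [Metric.mem_closedBall, dist_zero_right]
    rw [pi_norm_le_iff_of_nonneg (by norm_num)]
    intro i
    have hv' : v 0 ^ 2 + v 1 ^ 2 = 1 := hv
    rw [Real.norm_eq_abs, abs_le]
    have h0 : v i = v 0 ∨ v i = v 1 := by fin_cases i <;> simp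
    rcases h0 with h | h <;> rw [h] <;> constructor <;>
      nlinarith [sq_nonneg (v 0), sq_nonneg (v 1)]
  have hScl : IsClosed S := by
    have : S = (fun v : Fin 2 → ℝ => v 0 ^ 2 + v 1 ^ 2) ⁻¹' {1} := rfl
    rw [this]
    exact IsClosed.preimage (((continuous_apply (0 : Fin 2)).pow 2).add
      ((continuous_apply (1 : Fin 2)).pow 2)) isClosed_singleton
  obtain ⟨W, hWmem, ψ, hψ, ht⟩ := tendsto_subseq_of_bounded hSb (x := w) hw
  rw [hScl.closure_eq] at hWmem
  exact ⟨W, hWmem, ψ, hψ, fun i => tendsto_pi_nhds.1 ht i⟩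

set_option maxHeartbeats 1000000 in
lemma caseA {H : Set GG} {w : ℕ → Fin 2 → ℝ} {c : ℕ → ℝ}
    (hw : ∀ n, (w n) 0 ^ 2 + (w n) 1 ^ 2 = 1)
    (hcha : ChabautyTendsto (fun n => Lset' (w n) (c n)) H)
    {h : GG} (hh : h ∈ H) (hne : ((h.1 : Matrix (Fin 2) (Fin 2) ℝ)) ≠ 1) :
    ∃ W : Fin 2 → ℝ, W 0 ^ 2 + W 1 ^ 2 = 1 ∧ ∃ C : ℝ, H = Lset' W C := by
  obtain ⟨u, humem, hut⟩ := hcha.1 h hh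
  obtain ⟨s, hs1, hs2, hst⟩ := exists_param hw humem hut
  set σ := (h.1 : Matrix (Fin 2) (Fin 2) ℝ) 0 1 - (h.1 : Matrix (Fin 2) (Fin 2) ℝ) 1 0 with hσdef
  have hm := tendsto_GG_iff.1 hut
  have hσ : σ ≠ 0 := by
    intro h0
    apply hne
    ext i j
    have t1 : Tendsto (fun n => unipM (w n) (s n) i j) atTop
        (𝓝 ((h.1 : Matrix (Fin 2) (Fin 2) ℝ) i j)) :=
      (hm.1 i j).congr fun n => congrFun (congrFun (hs1 n) i) j
    have t2 := unip_tendsto_one hw (h0 ▸ hst) i j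
    exact tendsto_nhds_unique t1 t2
  have hev : ∀ᶠ n in atTop, s n ≠ 0 := hst.eventually_ne hσ
  set Ml : Fin 2 → Fin 2 → ℝ := fun i j =>
    ((h.1 : Matrix (Fin 2) (Fin 2) ℝ) i j - (1 : Matrix (Fin 2) (Fin 2) ℝ) i j) / σ with hMldef
  have hMl : ∀ i j, Tendsto (fun n => Mmat (w n) i j) atTop (𝓝 (Ml i j)) := by
    intro i j
    have t1 : Tendsto (fun n => unipM (w n) (s n) i j) atTop
        (𝓝 ((h.1 : Matrix (Fin 2) (Fin 2) ℝ) i j)) :=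
      (hm.1 i j).congr fun n => congrFun (congrFun (hs1 n) i) j
    have t0 : Tendsto (fun n => (unipM (w n) (s n) i j - (1 : Matrix (Fin 2) (Fin 2) ℝ) i j) / s n)
        atTop (𝓝 (Ml i j)) := (t1.sub_const _).div hst hσ
    apply t0.congr'
    filter_upwards [hev] with n hn
    rw [unipM_apply]
    field_simp
    ring
  set ζ : Fin 2 → ℝ := fun i => h.2 i / σ with hζdef
  have hζ : ∀ i, Tendsto (fun n => c n * w n i) atTop (𝓝 (ζ i)) := by
    intro i
    have t1 : Tendsto (fun n => (u n).2 i / s n) atTop (𝓝 (ζ i)) := (hm.2 i).div hst hσ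
    apply t1.congr'
    filter_upwards [hev] with n hn
    rw [hs2 n]
    simp only [Pi.smul_apply, smul_eq_mul]
    field_simp
  obtain ⟨W, hWu, ψ, hψ, hWt⟩ := bw_unit hw
  have hMW : ∀ i j, Mmat W i j = Ml i j := by
    intro i j
    exact tendsto_nhds_unique (Mmat_tendsto hWt i j) ((hMl i j).comp hψ.tendsto_atTop)
  set C := ζ 0 * W 0 + ζ 1 * W 1 with hCdef
  have hCt : Tendsto (fun n => c (ψ n)) atTop (𝓝 C) := by
    have t1 : Tendsto (fun n => (c (ψ n) * w (ψ n) 0) * w (ψ n) 0 +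
        (c (ψ n) * w (ψ n) 1) * w (ψ n) 1) atTop (𝓝 (ζ 0 * W 0 + ζ 1 * W 1)) :=
      (((hζ 0).comp hψ.tendsto_atTop).mul (hWt 0)).add
        (((hζ 1).comp hψ.tendsto_atTop).mul (hWt 1))
    apply t1.congr
    intro n
    linear_combination (c (ψ n)) * hw (ψ n)
  have hζW : ∀ i, ζ i = C * W i := by
    intro i
    exact tendsto_nhds_unique ((hζ i).comp hψ.tendsto_atTop) (hCt.mul (hWt i))
  refine ⟨W, hWu, C, ?_⟩
  apply Set.Subset.antisymm
  · intro h' hh'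
    obtain ⟨u', hum', hut'⟩ := hcha.1 h' hh'
    obtain ⟨s', hs1', hs2', hst'⟩ := exists_param hw hum' hut'
    set σ' := (h'.1 : Matrix (Fin 2) (Fin 2) ℝ) 0 1 - (h'.1 : Matrix (Fin 2) (Fin 2) ℝ) 1 0 with hσ'def
    have hm' := tendsto_GG_iff.1 hut'
    refine ⟨σ', ?_, ?_⟩
    · ext i j
      have t1 : Tendsto (fun n => unipM (w n) (s' n) i j) atTop
          (𝓝 ((h'.1 : Matrix (Fin 2) (Fin 2) ℝ) i j)) :=
        (hm'.1 i j).congr fun n => congrFun (congrFun (hs1' n) i) j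
      have t2 : Tendsto (fun n => unipM (w n) (s' n) i j) atTop (𝓝 (unipM W σ' i j)) := by
        rw [unipM_apply, hMW i j]
        exact Tendsto.congr (fun n => (unipM_apply (w n) (s' n) i j).symm)
          (tendsto_const_nhds.add (hst'.mul (hMl i j)))
      exact tendsto_nhds_unique t1 t2
    · funext i
      have t2 : Tendsto (fun n => (u' n).2 i) atTop (𝓝 (σ' * (C * W i))) := by
        have base : Tendsto (fun n => s' n * (c n * w n i)) atTop (𝓝 (σ' * ζ i)) :=
          hst'.mul (hζ i)
        rw [hζW i] at base
        apply base.congr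
        intro n
        rw [hs2' n]
        simp only [Pi.smul_apply, smul_eq_mul]
        ring
      have := tendsto_nhds_unique (hm'.2 i) t2
      show h'.2 i = ((σ' * C) • W) i
      simp only [Pi.smul_apply, smul_eq_mul, this]
      ring
  · intro y hy
    obtain ⟨s₀, hy1, hy2⟩ := hy
    apply hcha.2 id strictMono_id (fun n => (unipSL (w n) s₀, (s₀ * c n) • w n))
      (fun n => ⟨s₀, rfl, rfl⟩)
    rw [tendsto_GG_iff]
    constructor
    · intro i j
      show Tendsto (fun n => unipM (w n) s₀ i j) atTop
        (𝓝 ((y.1 : Matrix (Fin 2) (Fin 2) ℝ) i j))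
      rw [hy1, unipM_apply, hMW i j]
      exact Tendsto.congr (fun n => (unipM_apply (w n) s₀ i j).symm)
        (tendsto_const_nhds.add (tendsto_const_nhds.mul (hMl i j)))
    · intro i
      show Tendsto (fun n => ((s₀ * c n) • w n) i) atTop (𝓝 (y.2 i))
      rw [hy2]
      simp only [Pi.smul_apply, smul_eq_mul]
      have base : Tendsto (fun n => s₀ * (c n * w n i)) atTop (𝓝 (s₀ * ζ i)) :=
        tendsto_const_nhds.mul (hζ i)
      rw [hζW i] at base
      apply Tendsto.congr (f₁ := fun n => s₀ * (c n * w n i)) ?_ ?_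
      · intro n; ring
      · rw [show (s₀ * C) * W i = s₀ * (C * W i) by ring]
        exact base

lemma caseB {H : Set GG} {w : ℕ → Fin 2 → ℝ} {c : ℕ → ℝ}
    (hw : ∀ n, (w n) 0 ^ 2 + (w n) 1 ^ 2 = 1)
    (hcha : ChabautyTendsto (fun n => Lset' (w n) (c n)) H)
    (hall : ∀ h ∈ H, ((h.1 : Matrix (Fin 2) (Fin 2) ℝ)) = 1)
    (hne : H.Nonempty) :
    ∃ W : Fin 2 → ℝ, W 0 ^ 2 + W 1 ^ 2 = 1 ∧ H = LV W := by
  classical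
  -- step 1: subsequence with w convergent
  obtain ⟨W, hWu, ψ₁, hψ₁, hWt₁⟩ := bw_unit hw
  -- step 2: arctan compactification of c ∘ ψ₁
  obtain ⟨θ, hθmem, ψ₂, hψ₂, hθt⟩ := tendsto_subseq_of_bounded
    (Metric.isBounded_Icc (-(Real.pi / 2)) (Real.pi / 2))
    (x := fun n => Real.arctan (c (ψ₁ n)))
    (fun n => ⟨(Real.neg_pi_div_two_lt_arctan _).le, (Real.arctan_lt_pi_div_two _).le⟩)
  rw [isClosed_Icc.closure_eq] at hθmem
  set k := ψ₁ ∘ ψ₂ with hkdef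
  have hk : StrictMono k := hψ₁.comp hψ₂
  have hWt : ∀ i, Tendsto (fun n => w (k n) i) atTop (𝓝 (W i)) :=
    fun i => (hWt₁ i).comp hψ₂.tendsto_atTop
  -- bounded case is impossible
  have hbdd_im : ∀ C : ℝ, ¬ Tendsto (fun n => c (k n)) atTop (𝓝 C) := by
    intro C hC
    have hmem : ∀ s₀ : ℝ, (unipSL W s₀, (s₀ * C) • W) ∈ H := by
      intro s₀
      apply hcha.2 k hk (fun n => (unipSL (w (k n)) s₀, (s₀ * c (k n)) • w (k n)))
        (fun n => ⟨s₀, rfl, rfl⟩)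
      rw [tendsto_GG_iff]
      constructor
      · intro i j
        exact unip_tendsto hWt tendsto_const_nhds i j
      · intro i
        show Tendsto (fun n => ((s₀ * c (k n)) • w (k n)) i) atTop (𝓝 (((s₀ * C) • W) i))
        simp only [Pi.smul_apply, smul_eq_mul]
        exact (tendsto_const_nhds.mul hC).mul (hWt i)
      -- done
    have h1 := hall _ (hmem 1)
    have h01 := congrFun (congrFun h1 0) 1
    have h10 := congrFun (congrFun h1 1) 0
    simp [unipSL, unipM, Matrix.one_apply] at h01 h10
    rw [h01, h10] at hWu
    simp at hWu
  -- so |c ∘ k| → ∞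
  have habs : Tendsto (fun n => |c (k n)|) atTop atTop := by
    have harct : Tendsto (fun n => Real.arctan (c (k n))) atTop (𝓝 θ) := hθt
    rcases eq_or_lt_of_le hθmem.2 with hθ2 | hθ2
    · -- θ = π/2 : c → atTop
      have hlt : Tendsto (fun n => Real.arctan (c (k n))) atTop (𝓝[<] (Real.pi / 2)) := by
        rw [tendsto_nhdsWithin_iff]
        exact ⟨hθ2 ▸ harct, Filter.Eventually.of_forall fun n => Real.arctan_lt_pi_div_two _⟩
      have := Real.tendsto_tan_pi_div_two.comp hlt
      have hct : Tendsto (fun n => c (k n)) atTop atTop :=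
        this.congr fun n => Real.tan_arctan _
      exact tendsto_abs_atTop_atTop.comp hct
    rcases eq_or_lt_of_le hθmem.1 with hθ1 | hθ1
    · -- θ = -π/2 : c → atBot
      have hlt : Tendsto (fun n => Real.arctan (c (k n))) atTop (𝓝[>] (-(Real.pi / 2))) := by
        rw [tendsto_nhdsWithin_iff]
        exact ⟨hθ1 ▸ harct, Filter.Eventually.of_forall fun n => Real.neg_pi_div_two_lt_arctan _⟩
      have := Real.tendsto_tan_neg_pi_div_two.comp hlt
      have hct : Tendsto (fun n => c (k n)) atTop atBot :=
        this.congr fun n => Real.tan_arctan _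
      exact tendsto_abs_atBot_atTop.comp hct
    · -- interior: contradiction with hbdd_im
      exfalso
      have hcos : Real.cos θ ≠ 0 :=
        (Real.cos_pos_of_mem_Ioo ⟨hθ1, hθ2⟩).ne'
      have hcont : ContinuousAt Real.tan θ := Real.continuousAt_tan.2 hcos
      have := (hcont.tendsto.comp harct).congr fun n => Real.tan_arctan _
      exact hbdd_im (Real.tan θ) this
  -- LV W ⊆ H
  have hLVsub : LV W ⊆ H := by
    rintro y ⟨t, hy1, hy2⟩
    have hev : ∀ᶠ n in atTop, c (k n) ≠ 0 := by
      filter_upwards [habs.eventually_ge_atTop 1] with n hn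
      intro h0
      rw [h0] at hn
      simp at hn
      linarith
    have hnull : Tendsto (fun n => t / c (k n)) atTop (𝓝 0) := by
      apply squeeze_zero_norm (a := fun n => |t| / |c (k n)|)
      · intro n
        rw [Real.norm_eq_abs, abs_div]
      · exact Tendsto.div_atTop tendsto_const_nhds habs
    apply hcha.2 k hk (fun n => (unipSL (w (k n)) (t / c (k n)),
        ((t / c (k n)) * c (k n)) • w (k n))) (fun n => ⟨t / c (k n), rfl, rfl⟩)
    rw [tendsto_GG_iff]
    constructor
    · intro i j
      show Tendsto (fun n => unipM (w (k n)) (t / c (k n)) i j) atTop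
        (𝓝 ((y.1 : Matrix (Fin 2) (Fin 2) ℝ) i j))
      rw [hy1]
      exact unip_tendsto_one (fun n => hw (k n)) hnull i j
    · intro i
      show Tendsto (fun n => (((t / c (k n)) * c (k n)) • w (k n)) i) atTop (𝓝 (y.2 i))
      rw [hy2]
      simp only [Pi.smul_apply, smul_eq_mul]
      have base : Tendsto (fun n => t * w (k n) i) atTop (𝓝 (t * W i)) :=
        tendsto_const_nhds.mul (hWt i)
      apply base.congr'
      filter_upwards [hev] with n hn
      field_simp
  -- H ⊆ LV W
  refine ⟨W, hWu, Set.Subset.antisymm ?_ hLVsub⟩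
  intro h hh
  have hh' : ((1 : SL2), (1 : ℝ) • W) ∈ H := hLVsub ⟨1, rfl, rfl⟩
  obtain ⟨u, humem, hut⟩ := hcha.1 h hh
  obtain ⟨u', humem', hut'⟩ := hcha.1 _ hh'
  obtain ⟨s, hs1, hs2, hst⟩ := exists_param hw humem hut
  obtain ⟨s', hs1', hs2', hst'⟩ := exists_param hw humem' hut'
  have hm := tendsto_GG_iff.1 hut
  have hm' := tendsto_GG_iff.1 hut'
  -- parallelism
  have hpar : h.2 0 * ((1 : ℝ) • W) 1 - h.2 1 * ((1 : ℝ) • W) 0 = 0 := by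
    have t1 : Tendsto (fun n => (u n).2 0 * (u' n).2 1 - (u n).2 1 * (u' n).2 0) atTop
        (𝓝 (h.2 0 * ((1 : ℝ) • W) 1 - h.2 1 * ((1 : ℝ) • W) 0)) :=
      ((hm.2 0).mul (hm'.2 1)).sub ((hm.2 1).mul (hm'.2 0))
    have t2 : Tendsto (fun n => (u n).2 0 * (u' n).2 1 - (u n).2 1 * (u' n).2 0) atTop
        (𝓝 0) := by
      apply tendsto_const_nhds.congr
      intro n
      rw [hs2 n, hs2' n]
      simp only [Pi.smul_apply, smul_eq_mul]
      ring
    exact tendsto_nhds_unique t1 t2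
  simp only [Pi.smul_apply, smul_eq_mul, one_mul] at hpar
  refine ⟨h.2 0 * W 0 + h.2 1 * W 1, ?_, ?_⟩
  · exact Subtype.ext (hall h hh)
  · funext i
    simp only [Pi.smul_apply, smul_eq_mul]
    have hcase : (h.2 i = h.2 0 ∧ W i = W 0) ∨ (h.2 i = h.2 1 ∧ W i = W 1) := by
      fin_cases i <;> simp
    rcases hcase with ⟨e1, e2⟩ | ⟨e1, e2⟩ <;> rw [e1, e2]
    · linear_combination (-(h.2 0)) * hWu + W 1 * hpar
    · linear_combination (-(h.2 1)) * hWu - W 0 * hpar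

lemma LV_eq_conj (w : Fin 2 → ℝ) (hw : w 0 ^ 2 + w 1 ^ 2 = 1) :
    LV w = conjSet (rotSL w hw, 0) V0 := by
  rw [conj_v0_eq (rotSL w hw) w 1 one_ne_zero (by simp [rotSL]) (by simp [rotSL])]

lemma gone_gmul (z : GG) : gmul gone z = z := by
  apply Prod.ext <;> simp [gmul, gone]

lemma gmul_gone (z : GG) : gmul z gone = z := by
  apply Prod.ext <;> simp [gmul, gone]

lemma ginv_gmul_cancel (x : GG) : gmul (ginv x) x = gone := by
  apply Prod.ext <;> simp [gmul, ginv, gone]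

lemma gmul_ginv_cancel (x : GG) : gmul x (ginv x) = gone := by
  apply Prod.ext
  · show x.1 * x.1⁻¹ = 1
    exact mul_inv_cancel x.1
  · show x.2 + (x.1 : Matrix (Fin 2) (Fin 2) ℝ).mulVec
      (-((x.1⁻¹ : SL2) : Matrix (Fin 2) (Fin 2) ℝ).mulVec x.2) = (gone).2
    rw [Matrix.mulVec_neg, Matrix.mulVec_mulVec, ← Matrix.SpecialLinearGroup.coe_mul,
      mul_inv_cancel, Matrix.SpecialLinearGroup.coe_one, Matrix.one_mulVec, add_neg_cancel]
    rfl

lemma ginv_ginv (x : GG) : ginv (ginv x) = x := by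
  apply Prod.ext
  · show (x.1⁻¹)⁻¹ = x.1
    exact inv_inv x.1
  · show -(((x.1⁻¹)⁻¹ : SL2) : Matrix (Fin 2) (Fin 2) ℝ).mulVec
      (-((x.1⁻¹ : SL2) : Matrix (Fin 2) (Fin 2) ℝ).mulVec x.2) = x.2
    rw [Matrix.mulVec_neg, neg_neg, Matrix.mulVec_mulVec, inv_inv,
      ← Matrix.SpecialLinearGroup.coe_mul, mul_inv_cancel,
      Matrix.SpecialLinearGroup.coe_one, Matrix.one_mulVec]

lemma gmul_assoc (a b c : GG) : gmul (gmul a b) c = gmul a (gmul b c) := by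
  apply Prod.ext
  · simp [gmul, mul_assoc]
  · simp only [gmul, Matrix.mulVec_add, Matrix.mulVec_mulVec,
      Matrix.SpecialLinearGroup.coe_mul, add_assoc]

def cphi (y z : GG) : GG := gmul (gmul y z) (ginv y)

lemma gmul_cancel_left (y z : GG) : gmul (ginv y) (gmul y z) = z := by
  rw [← gmul_assoc, ginv_gmul_cancel, gone_gmul]

lemma gmul_cancel_left' (y z : GG) : gmul y (gmul (ginv y) z) = z := by
  rw [← gmul_assoc, gmul_ginv_cancel, gone_gmul]

lemma cphi_left_inv (y z : GG) : cphi (ginv y) (cphi y z) = z := by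
  unfold cphi
  rw [ginv_ginv]
  rw [show gmul (gmul y z) (ginv y) = gmul y (gmul z (ginv y)) from gmul_assoc y z (ginv y)]
  rw [gmul_cancel_left]
  rw [gmul_assoc, ginv_gmul_cancel, gmul_gone]

lemma cphi_right_inv (y z : GG) : cphi y (cphi (ginv y) z) = z := by
  unfold cphi
  rw [ginv_ginv]
  rw [show gmul (gmul (ginv y) z) y = gmul (ginv y) (gmul z y) from gmul_assoc (ginv y) z y]
  rw [gmul_cancel_left']
  rw [gmul_assoc, gmul_ginv_cancel, gmul_gone]

lemma cphi_eq (y z : GG) : cphi y z =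
    (y.1 * z.1 * y.1⁻¹,
      y.2 + (y.1 : Matrix (Fin 2) (Fin 2) ℝ).mulVec z.2
        - ((y.1 * z.1 * y.1⁻¹ : SL2) : Matrix (Fin 2) (Fin 2) ℝ).mulVec y.2) := by
  apply Prod.ext
  · show (y.1 * z.1) * y.1⁻¹ = y.1 * z.1 * y.1⁻¹
    rfl
  · show (y.2 + (y.1 : Matrix (Fin 2) (Fin 2) ℝ).mulVec z.2) +
      ((y.1 * z.1 : SL2) : Matrix (Fin 2) (Fin 2) ℝ).mulVec
        (-((y.1⁻¹ : SL2) : Matrix (Fin 2) (Fin 2) ℝ).mulVec y.2) = _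
    rw [Matrix.mulVec_neg, Matrix.mulVec_mulVec, ← Matrix.SpecialLinearGroup.coe_mul]
    rw [sub_eq_add_neg, add_assoc]

lemma cphi_cont (y : GG) : Continuous (cphi y) := by
  have hcoe : Continuous (fun z : GG => (z.1 : Matrix (Fin 2) (Fin 2) ℝ)) :=
    continuous_induced_dom.comp continuous_fst
  have hcm : Continuous (fun z : GG =>
      ((y.1 * z.1 * y.1⁻¹ : SL2) : Matrix (Fin 2) (Fin 2) ℝ)) := by
    simp only [Matrix.SpecialLinearGroup.coe_mul]
    exact (continuous_const.matrix_mul hcoe).matrix_mul continuous_const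
  have heq : cphi y = fun z =>
      ((y.1 * z.1 * y.1⁻¹ : SL2),
        y.2 + (y.1 : Matrix (Fin 2) (Fin 2) ℝ).mulVec z.2
          - ((y.1 * z.1 * y.1⁻¹ : SL2) : Matrix (Fin 2) (Fin 2) ℝ).mulVec y.2) :=
    funext (cphi_eq y)
  rw [heq]
  apply Continuous.prodMk
  · apply continuous_induced_rng.2
    exact hcm
  · exact (continuous_const.add
      (continuous_const.matrix_mulVec (continuous_snd.comp continuous_id))).sub
      (hcm.matrix_mulVec continuous_const)

lemma conjSet_cphi (y : GG) (S : Set GG) : conjSet y S = cphi y '' S := rfl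

lemma chabauty_conj (y : GG) {S : ℕ → Set GG} {T : Set GG}
    (h : ChabautyTendsto S T) :
    ChabautyTendsto (fun n => conjSet y (S n)) (conjSet y T) := by
  obtain ⟨h1, h2⟩ := h
  constructor
  · rintro _ ⟨t, ht, rfl⟩
    obtain ⟨u, hu, hut⟩ := h1 t ht
    exact ⟨fun n => cphi y (u n), fun n => ⟨u n, hu n, rfl⟩,
      ((cphi_cont y).tendsto t).comp hut⟩
  · intro k hk u hu z hz
    have hu' : ∀ n, cphi (ginv y) (u n) ∈ S (k n) := by
      intro n
      obtain ⟨t, ht, hteq⟩ := hu n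
      rw [← hteq]
      show cphi (ginv y) (cphi y t) ∈ _
      rw [cphi_left_inv]
      exact ht
    have hz' : Tendsto (fun n => cphi (ginv y) (u n)) atTop (𝓝 (cphi (ginv y) z)) :=
      ((cphi_cont (ginv y)).tendsto z).comp hz
    exact ⟨cphi (ginv y) z, h2 k hk _ hu' _ hz', cphi_right_inv y z⟩

lemma conjSet_gmul (y z : GG) (S : Set GG) :
    conjSet (gmul y z) S = conjSet y (conjSet z S) := by
  have hginv : ginv (gmul y z) = gmul (ginv z) (ginv y) := by
    apply Prod.ext
    · show (y.1 * z.1)⁻¹ = z.1⁻¹ * y.1⁻¹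
      exact mul_inv_rev y.1 z.1
    · show -(((y.1 * z.1)⁻¹ : SL2) : Matrix (Fin 2) (Fin 2) ℝ).mulVec
        (y.2 + (y.1 : Matrix (Fin 2) (Fin 2) ℝ).mulVec z.2) = _
      show _ = -((z.1⁻¹ : SL2) : Matrix (Fin 2) (Fin 2) ℝ).mulVec z.2 +
        ((z.1⁻¹ : SL2) : Matrix (Fin 2) (Fin 2) ℝ).mulVec
          (-((y.1⁻¹ : SL2) : Matrix (Fin 2) (Fin 2) ℝ).mulVec y.2)
      rw [mul_inv_rev]
      simp only [Matrix.mulVec_add, Matrix.mulVec_neg, Matrix.mulVec_mulVec,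
        ← Matrix.SpecialLinearGroup.coe_mul, mul_assoc, inv_mul_cancel, mul_one, neg_add]
      abel
  have : ∀ t, gmul (gmul (gmul y z) t) (ginv (gmul y z)) = cphi y (cphi z t) := by
    intro t
    rw [hginv]
    unfold cphi
    rw [← gmul_assoc, ← gmul_assoc, gmul_assoc y z t]
  show (fun t => gmul (gmul (gmul y z) t) (ginv (gmul y z))) '' S = _
  rw [funext this]
  rw [conjSet_cphi, conjSet_cphi, Set.image_image]

lemma unit10 : (![(1:ℝ), 0]) 0 ^ 2 + (![(1:ℝ), 0]) 1 ^ 2 = 1 := by simp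

lemma base_chabauty :
    ChabautyTendsto (fun n => Lset' ![(1:ℝ), 0] (-((n : ℝ) + 1))) V0 := by
  constructor
  · rintro h ⟨t, h1, h2⟩
    refine ⟨fun n => (unipSL ![(1:ℝ), 0] (-(t / ((n : ℝ) + 1))),
      ((-(t / ((n : ℝ) + 1))) * (-((n : ℝ) + 1))) • ![(1:ℝ), 0]),
      fun n => ⟨-(t / ((n : ℝ) + 1)), rfl, rfl⟩, ?_⟩
    rw [tendsto_GG_iff]
    have hnull : Tendsto (fun n : ℕ => -(t / ((n : ℝ) + 1))) atTop (𝓝 0) := by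
      have : Tendsto (fun n : ℕ => (n : ℝ) + 1) atTop atTop :=
        tendsto_atTop_add_const_right _ 1 tendsto_natCast_atTop_atTop
      have := Tendsto.div_atTop (tendsto_const_nhds (x := t)) this
      simpa using this.neg
    constructor
    · intro i j
      have hc1 : ((h.1 : SL2) : Matrix (Fin 2) (Fin 2) ℝ) = 1 := by
        rw [h1]; exact Matrix.SpecialLinearGroup.coe_one
      rw [hc1]
      exact unip_tendsto_one (fun _ => unit10) hnull i j
    · intro i
      rw [h2]
      apply tendsto_const_nhds.congr
      intro n
      have hne : ((n : ℝ) + 1) ≠ 0 := by positivity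
      fin_cases i <;> simp <;> field_simp <;> ring
  · intro k hk u hu z hz
    have hu' : ∀ n, u n ∈ Lset' (![(1:ℝ), 0]) (-(((k n : ℕ) : ℝ) + 1)) := hu
    obtain ⟨s, hs1, hs2, hst⟩ :=
      exists_param (w := fun _ => ![(1:ℝ), 0]) (c := fun n => -(((k n : ℕ) : ℝ) + 1))
        (fun _ => unit10) hu' hz
    have hm := tendsto_GG_iff.1 hz
    set σ := (z.1 : Matrix (Fin 2) (Fin 2) ℝ) 0 1 - (z.1 : Matrix (Fin 2) (Fin 2) ℝ) 1 0 with hσdef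
    have hkat : Tendsto (fun n => ((k n : ℕ) : ℝ) + 1) atTop atTop :=
      tendsto_atTop_add_const_right _ 1
        (tendsto_natCast_atTop_atTop.comp hk.tendsto_atTop)
    have hσ : σ = 0 := by
      by_contra hσne
      have t0 : Tendsto (fun n => s n * (((k n : ℕ) : ℝ) + 1)) atTop (𝓝 (-(z.2 0))) := by
        have hv := hm.2 0
        have : Tendsto (fun n => -(s n * (((k n : ℕ) : ℝ) + 1))) atTop (𝓝 (z.2 0)) := by
          apply hv.congr
          intro n
          rw [hs2 n]
          simp
          ring
        simpa using this.neg
      rcases lt_or_gt_of_ne hσne with hlt | hgt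
      · have := Tendsto.neg_mul_atTop hlt hst hkat
        exact not_tendsto_atBot_of_tendsto_nhds t0 this
      · have := Tendsto.pos_mul_atTop hgt hst hkat
        exact not_tendsto_atTop_of_tendsto_nhds t0 this
    have hz1 : (z.1 : Matrix (Fin 2) (Fin 2) ℝ) = 1 := by
      ext i j
      have t1 : Tendsto (fun n => unipM (![(1:ℝ), 0]) (s n) i j) atTop
          (𝓝 ((z.1 : Matrix (Fin 2) (Fin 2) ℝ) i j)) :=
        (hm.1 i j).congr fun n => congrFun (congrFun (hs1 n) i) j
      have t2 := unip_tendsto_one (w := fun _ => ![(1:ℝ), 0]) (fun _ => unit10)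
        (hσ ▸ hst) i j
      exact tendsto_nhds_unique t1 t2
    have hz2 : z.2 1 = 0 := by
      have t1 : Tendsto (fun _ : ℕ => (0 : ℝ)) atTop (𝓝 (z.2 1)) := by
        apply (hm.2 1).congr
        intro n
        rw [hs2 n]
        simp
      exact tendsto_nhds_unique t1 tendsto_const_nhds
    refine ⟨z.2 0, Subtype.ext (hz1.trans Matrix.SpecialLinearGroup.coe_one.symm), ?_⟩
    funext i
    fin_cases i
    · simp
    · simpa using hz2


/-- A closed subgroup `H` of `G` is a Chabauty limit of conjugates of `N⁺` iff `H` is a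
conjugate of `N⁺` or of `V₀`. -/
theorem stmt_9 (H : Set GG) (hH : IsClosedSubgroup H) :
    (∃ x : ℕ → GG, ChabautyTendsto (fun n => conjSet (x n) Nplus) H) ↔
      (∃ y : GG, H = conjSet y Nplus ∨ H = conjSet y V0) := by

  constructor
  · rintro ⟨x, hcha⟩
    have hparam : ∀ n, ∃ w : Fin 2 → ℝ, w 0 ^ 2 + w 1 ^ 2 = 1 ∧
        ∃ c : ℝ, conjSet (x n) Nplus = Lset' w c := by
      intro n
      have := conj_nplus_param ((x n).1, (x n).2)
      simpa using this
    choose w hw c hLc using hparam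
    have hS : (fun n => conjSet (x n) Nplus) = fun n => Lset' (w n) (c n) := funext hLc
    rw [hS] at hcha
    by_cases hA : ∃ h ∈ H, ((h.1 : Matrix (Fin 2) (Fin 2) ℝ)) ≠ 1
    · obtain ⟨h, hh, hne⟩ := hA
      obtain ⟨W, hWu, C, hHL⟩ := caseA hw hcha hh hne
      refine ⟨(rotSL W hWu, ![C * W 1, -(C * W 0)]), Or.inl ?_⟩
      rw [hHL]
      exact Lset'_eq_conj W hWu C
    · push_neg at hA
      obtain ⟨W, hWu, hHL⟩ := caseB hw hcha hA ⟨gone, hH.2.1⟩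
      refine ⟨(rotSL W hWu, 0), Or.inr ?_⟩
      rw [hHL]
      exact LV_eq_conj W hWu
  · rintro ⟨y, hy | hy⟩
    · refine ⟨fun _ => y, ?_, ?_⟩
      · intro h hh
        have hh' : h ∈ conjSet y Nplus := hy ▸ hh
        exact ⟨fun _ => h, fun _ => hh', tendsto_const_nhds⟩
      · intro k hk u hu z hz
        rw [hy]
        obtain ⟨w, hwu, c, hLc⟩ := conj_nplus_param ((y.1, y.2) : GG)
        have hLc' : conjSet y Nplus = Lset' w c := by simpa using hLc
        rw [hLc']
        have hu2 : ∀ n, u n ∈ Lset' w c := fun n => hLc' ▸ hu n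
        exact Lset'_limit w hwu c hu2 hz
    · refine ⟨fun n => gmul y ((1 : SL2), ![0, (n : ℝ) + 1]), ?_⟩
      have hS : ∀ n : ℕ, conjSet (gmul y ((1 : SL2), ![0, (n : ℝ) + 1])) Nplus =
          conjSet y (Lset' ![(1:ℝ), 0] (-((n : ℝ) + 1))) := by
        intro n
        rw [conjSet_gmul]
        congr 1
        have h0 : ((1 : SL2) : Matrix (Fin 2) (Fin 2) ℝ) 0 0 = 1 * (![(1:ℝ), 0]) 0 := by
          simp [Matrix.SpecialLinearGroup.coe_one]
        have h1 : ((1 : SL2) : Matrix (Fin 2) (Fin 2) ℝ) 1 0 = 1 * (![(1:ℝ), 0]) 1 := by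
          simp [Matrix.SpecialLinearGroup.coe_one]
        have := conj_nplus_eq (1 : SL2) (![0, (n : ℝ) + 1]) (![(1:ℝ), 0]) 1 one_ne_zero h0 h1
        rw [this]
        congr 1
        simp
      rw [funext hS, hy]
      exact chabauty_conj y base_chabauty

end
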